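/- For any events and integers $0 \leq m \leq k$, $P\left(\bigcup_{j=0}^{k} A_{n+j}\right) \leq \sum_{j=0}^{k-m} P(A_{n+j} \cap A_{n+j+1}^c \cap \cdots \cap A_{n+j+m}^c) + \sum_{j=k-m+1}^{k} P(A_{n+j})$. -/

import Mathlib

open MeasureTheory Filter Set

theorem truncated_bound {Ω : Type*} [MeasurableSpace Ω] (μ : Measure Ω)
    [IsProbabilityMeasure μ] (A : ℕ → Set Ω) (hA : ∀ n, MeasurableSet (A n))
    (n m k : ℕ) (hn : 1 ≤ n) (hmk : m ≤ k) :
    μ (⋃ j ∈ Finset.range (k + 1), A (n + j)) ≤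
      (∑ j ∈ Finset.range (k - m + 1),
          μ (A (n + j) ∩ ⋂ i ∈ Finset.Icc 1 m, (A (n + j + i))ᶜ))
        + ∑ j ∈ Finset.Icc (k - m + 1) k, μ (A (n + j)) := by
  classical
  set C : ℕ → Set Ω := fun j => A (n + j) \ ⋃ i ∈ Finset.Ioc j k, A (n + i) with hC
  have hsub : (⋃ j ∈ Finset.range (k + 1), A (n + j)) ⊆ ⋃ j ∈ Finset.range (k + 1), C j := by
    intro x hx
    simp only [Set.mem_iUnion, exists_prop, Finset.mem_range] at hx
    obtain ⟨j, hj, hxj⟩ := hx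
    have hS : ((Finset.range (k + 1)).filter (fun j => x ∈ A (n + j))).Nonempty :=
      ⟨j, by simp [hj, hxj]⟩
    set j0 := Finset.max' _ hS with hj0
    have hmem := Finset.max'_mem _ hS
    simp only [Finset.mem_filter, Finset.mem_range] at hmem
    simp only [Set.mem_iUnion, exists_prop, Finset.mem_range]
    refine ⟨j0, hmem.1, hmem.2, ?_⟩
    intro hxU
    simp only [Set.mem_iUnion, exists_prop, Finset.mem_Ioc] at hxU
    obtain ⟨i, ⟨hi1, hi2⟩, hxi⟩ := hxU
    have : i ≤ j0 := Finset.le_max' _ i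
      (by simp only [Finset.mem_filter, Finset.mem_range]; exact ⟨by omega, hxi⟩)
    omega
  calc μ (⋃ j ∈ Finset.range (k + 1), A (n + j))
      ≤ μ (⋃ j ∈ Finset.range (k + 1), C j) := measure_mono hsub
    _ ≤ ∑ j ∈ Finset.range (k + 1), μ (C j) := measure_biUnion_finset_le _ _
    _ = ∑ j ∈ Finset.range (k - m + 1), μ (C j) + ∑ j ∈ Finset.Icc (k - m + 1) k, μ (C j) := by
        rw [Finset.range_eq_Ico, Finset.range_eq_Ico, ← Finset.Ico_add_one_right_eq_Icc,
          Finset.sum_Ico_consecutive _ (Nat.zero_le (k - m + 1)) (by omega : k - m + 1 ≤ k + 1)]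
    _ ≤ _ := by
        gcongr with j hj j hj
        · -- j ≤ k - m
          simp only [Finset.mem_range] at hj
          intro x hx
          obtain ⟨hx1, hx2⟩ := hx
          refine ⟨hx1, ?_⟩
          simp only [Set.mem_iUnion, exists_prop, Finset.mem_Ioc] at hx2
          simp only [Set.mem_iInter, Set.mem_compl_iff, Finset.mem_Icc]
          rintro i ⟨hi1, hi2⟩ hxA
          exact hx2 ⟨j + i, ⟨by omega, by omega⟩, by rwa [← Nat.add_assoc]⟩
        · exact Set.diff_subset
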